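/- Let ℓ(z, y) = -log([σ(z)]_y) be the multiclass logistic loss with softmax σ on ℝ^K. For any z ∈ ℝ^K, α ∈ ℝ, and labels l, y ∈ {1,...,K}: if l ≠ y then ℓ(z + α e_l, y) - ℓ(z, y) ≤ (e^α - 1)[σ(z)]_l, and if l = y then ℓ(z + α e_l, y) - ℓ(z, y) ≤ (e^{-α} - 1)(1 - [σ(z)]_y). -/

import Mathlib

open Matrix

/-- The softmax function. -/
noncomputable def softmax {K : ℕ} (z : Fin K → ℝ) : Fin K → ℝ :=
  fun k => Real.exp (z k) / ∑ j, Real.exp (z j)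

/-- Multiclass logistic loss `ℓ(z, y) = -log [σ(z)]_y`. -/
noncomputable def mlogloss {K : ℕ} (z : Fin K → ℝ) (y : Fin K) : ℝ :=
  -Real.log (softmax z y)

lemma mlogloss_eq {K : ℕ} (z : Fin K → ℝ) (y : Fin K) :
    mlogloss z y = Real.log (∑ j, Real.exp (z j)) - z y := by
  have hS : 0 < ∑ j, Real.exp (z j) :=
    Finset.sum_pos (fun _ _ => Real.exp_pos _) ⟨y, Finset.mem_univ y⟩
  unfold mlogloss softmax
  rw [Real.log_div (Real.exp_ne_zero _) hS.ne', Real.log_exp]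
  ring

/-- Increase of the multiclass logistic loss when the `l`-th logit is shifted by `α`. -/
theorem mlogloss_shift_bound (K : ℕ) (z : Fin K → ℝ) (α : ℝ) (l y : Fin K) :
    (l ≠ y →
      mlogloss (z + α • (Pi.single l 1 : Fin K → ℝ)) y - mlogloss z y
        ≤ (Real.exp α - 1) * softmax z l) ∧
    (l = y →
      mlogloss (z + α • (Pi.single l 1 : Fin K → ℝ)) y - mlogloss z y
        ≤ (Real.exp (-α) - 1) * (1 - softmax z y)) := by
  set w : Fin K → ℝ := z + α • (Pi.single l 1 : Fin K → ℝ) with hw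
  have hS : 0 < ∑ j, Real.exp (z j) :=
    Finset.sum_pos (fun _ _ => Real.exp_pos _) ⟨y, Finset.mem_univ y⟩
  have hS' : 0 < ∑ j, Real.exp (w j) :=
    Finset.sum_pos (fun _ _ => Real.exp_pos _) ⟨y, Finset.mem_univ y⟩
  set S := ∑ j, Real.exp (z j) with hSdef
  set S' := ∑ j, Real.exp (w j) with hS'def
  have hwl : w l = z l + α := by simp [hw, Pi.single_eq_same]
  have hwne : ∀ j, j ≠ l → w j = z j := by
    intro j hj
    simp [hw, Pi.single_eq_of_ne hj]
  have hsum : S' = S + (Real.exp α - 1) * Real.exp (z l) := by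
    have h1 : ∑ j, (Real.exp (w j) - Real.exp (z j))
        = (Real.exp α - 1) * Real.exp (z l) := by
      rw [Fintype.sum_eq_single l (fun b hb => by rw [hwne b hb]; ring)]
      rw [hwl, Real.exp_add]
      ring
    have h2 : ∑ j, (Real.exp (w j) - Real.exp (z j)) = S' - S := by
      rw [Finset.sum_sub_distrib]
    linarith
  constructor
  · intro hne
    have hwy : w y = z y := hwne y (Ne.symm hne)
    rw [mlogloss_eq, mlogloss_eq, hwy]
    have hlog := Real.log_le_sub_one_of_pos (div_pos hS' hS)
    rw [Real.log_div hS'.ne' hS.ne'] at hlog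
    have : S' / S - 1 = (Real.exp α - 1) * softmax z l := by
      unfold softmax
      rw [← hSdef]
      rw [hsum]
      field_simp
      ring
    linarith [this ▸ hlog]
  · intro hl
    subst hl
    have hwy : w l = z l + α := hwl
    rw [mlogloss_eq, mlogloss_eq, hwy]
    have hpos : 0 < S' / (S * Real.exp α) :=
      div_pos hS' (mul_pos hS (Real.exp_pos α))
    have hlog := Real.log_le_sub_one_of_pos hpos
    rw [Real.log_div hS'.ne' (mul_pos hS (Real.exp_pos α)).ne',
        Real.log_mul hS.ne' (Real.exp_ne_zero α), Real.log_exp] at hlog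
    have heq : S' / (S * Real.exp α) - 1
        = (Real.exp (-α) - 1) * (1 - softmax z l) := by
      unfold softmax
      rw [← hSdef]
      rw [hsum, Real.exp_neg]
      field_simp
      ring
    linarith [heq ▸ hlog]
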